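/- Let ⟨·,·⟩₁ be a non-degenerate symmetric bilinear form on ℝ^N given by ⟨u,v⟩₁ = u^T J v for a non-singular symmetric matrix J. Let A, B be q × N real matrices with rows A_i, B_i. Assume ⟨A_i, A_j⟩₁ = ⟨B_i, B_j⟩₁ for all i,j, that ker A^T = ker B^T, and that the rank of the common Gram matrix G equals the rank of A. Then there exists U ∈ GL(N) with U^T J U = J such that B = A U^T. -/

import Mathlib

open Matrix

section Helpers

variable {N : ℕ}

/-- The bilinear form `⟨x,y⟩ = xᵀ J y`. -/
def bfm (J : Matrix (Fin N) (Fin N) ℝ) (x y : Fin N → ℝ) : ℝ := x ⬝ᵥ (J *ᵥ y)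

lemma bfm_symm {J : Matrix (Fin N) (Fin N) ℝ} (hJ : Jᵀ = J) (x y : Fin N → ℝ) :
    bfm J x y = bfm J y x := by
  rw [bfm, bfm, dotProduct_mulVec, dotProduct_comm, ← mulVec_transpose, hJ]

lemma bfm_add_left (J : Matrix (Fin N) (Fin N) ℝ) (x x' y : Fin N → ℝ) :
    bfm J (x + x') y = bfm J x y + bfm J x' y := add_dotProduct _ _ _

lemma bfm_sub_left (J : Matrix (Fin N) (Fin N) ℝ) (x x' y : Fin N → ℝ) :
    bfm J (x - x') y = bfm J x y - bfm J x' y := sub_dotProduct _ _ _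

lemma bfm_smul_left (J : Matrix (Fin N) (Fin N) ℝ) (c : ℝ) (x y : Fin N → ℝ) :
    bfm J (c • x) y = c * bfm J x y := smul_dotProduct _ _ _

lemma bfm_add_right (J : Matrix (Fin N) (Fin N) ℝ) (x y y' : Fin N → ℝ) :
    bfm J x (y + y') = bfm J x y + bfm J x y' := by
  rw [bfm, mulVec_add, dotProduct_add]; rfl

lemma bfm_sub_right (J : Matrix (Fin N) (Fin N) ℝ) (x y y' : Fin N → ℝ) :
    bfm J x (y - y') = bfm J x y - bfm J x y' := by
  rw [bfm, mulVec_sub, dotProduct_sub]; rfl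

lemma bfm_smul_right (J : Matrix (Fin N) (Fin N) ℝ) (c : ℝ) (x y : Fin N → ℝ) :
    bfm J x (c • y) = c * bfm J x y := by
  rw [bfm, mulVec_smul, dotProduct_smul]; rfl

/-- Reflection along an anisotropic vector `w`. -/
noncomputable def reflM (J : Matrix (Fin N) (Fin N) ℝ) (w : Fin N → ℝ) :
    Matrix (Fin N) (Fin N) ℝ :=
  1 - (2 / bfm J w w) • vecMulVec w (J *ᵥ w)

lemma reflM_apply {J : Matrix (Fin N) (Fin N) ℝ} (hJ : Jᵀ = J) (w x : Fin N → ℝ) :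
    reflM J w *ᵥ x = x - ((2 / bfm J w w) * bfm J w x) • w := by
  have h1 : vecMulVec w (J *ᵥ w) *ᵥ x = ((J *ᵥ w) ⬝ᵥ x) • w := by
    ext i
    simp [vecMulVec, mulVec, dotProduct, Finset.mul_sum, mul_comm, mul_left_comm]
  have h2 : (J *ᵥ w) ⬝ᵥ x = bfm J w x := by
    rw [dotProduct_comm, ← bfm, bfm_symm hJ]
  rw [reflM, sub_mulVec, one_mulVec, smul_mulVec, h1, h2, smul_smul]

lemma reflM_isometry {J : Matrix (Fin N) (Fin N) ℝ} (hJ : Jᵀ = J) {w : Fin N → ℝ}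
    (hw : bfm J w w ≠ 0) (x y : Fin N → ℝ) :
    bfm J (reflM J w *ᵥ x) (reflM J w *ᵥ y) = bfm J x y := by
  rw [reflM_apply hJ, reflM_apply hJ, bfm_sub_left, bfm_sub_right, bfm_sub_right,
    bfm_smul_left, bfm_smul_left, bfm_smul_right, bfm_smul_right,
    bfm_symm hJ w x, bfm_symm hJ w y]
  field_simp
  ring

lemma reflM_fix {J : Matrix (Fin N) (Fin N) ℝ} (hJ : Jᵀ = J) {w x : Fin N → ℝ}
    (hx : bfm J w x = 0) : reflM J w *ᵥ x = x := by
  rw [reflM_apply hJ, hx, mul_zero, zero_smul, sub_zero]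

/-- First step of Witt extension: an isometry sending `a` to `b`, fixing common
orthogonals of `a` and `b`. -/
lemma step_lemma {J : Matrix (Fin N) (Fin N) ℝ} (hJ : Jᵀ = J) {a b : Fin N → ℝ}
    (hab : bfm J a a = bfm J b b) (ha : bfm J a a ≠ 0) :
    ∃ U : Matrix (Fin N) (Fin N) ℝ,
      (∀ x y, bfm J (U *ᵥ x) (U *ᵥ y) = bfm J x y) ∧ U *ᵥ a = b ∧
      (∀ x, bfm J x a = 0 → bfm J x b = 0 → U *ᵥ x = x) := by
  have key : bfm J (a - b) (a - b) + bfm J (a + b) (a + b) = 4 * bfm J a a := by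
    rw [bfm_sub_left, bfm_sub_right, bfm_sub_right, bfm_add_left, bfm_add_right,
      bfm_add_right, bfm_symm hJ b a, hab]; ring
  by_cases hd : bfm J (a - b) (a - b) ≠ 0
  · refine ⟨reflM J (a - b), reflM_isometry hJ hd, ?_, fun x hx1 hx2 => ?_⟩
    · have hdd : bfm J (a - b) (a - b) = 2 * bfm J (a - b) a := by
        rw [bfm_sub_left, bfm_sub_right, bfm_sub_right, bfm_sub_left, bfm_symm hJ b a, hab]
        ring
      have hone : 2 / bfm J (a - b) (a - b) * bfm J (a - b) a = 1 := by
        have h2 : bfm J (a - b) a ≠ 0 := by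
          rw [hdd] at hd; intro h; rw [h] at hd; simp at hd
        rw [hdd]; field_simp
      rw [reflM_apply hJ, hone, one_smul, sub_sub_cancel]
    · refine reflM_fix hJ ?_
      rw [bfm_symm hJ, bfm_sub_right, hx1, hx2, sub_zero]
  · push_neg at hd
    have hs : bfm J (a + b) (a + b) ≠ 0 := by
      intro h; rw [hd, h] at key; simp at key; exact ha (by linarith)
    have hb : bfm J b b ≠ 0 := hab ▸ ha
    refine ⟨reflM J b * reflM J (a + b), fun x y => ?_, ?_, fun x hx1 hx2 => ?_⟩
    · rw [← mulVec_mulVec, ← mulVec_mulVec, reflM_isometry hJ hb, reflM_isometry hJ hs]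
    · have hdd : bfm J (a + b) (a + b) = 2 * bfm J (a + b) a := by
        rw [bfm_add_left, bfm_add_right, bfm_add_right, bfm_add_left, bfm_symm hJ b a, hab]
        ring
      have hone : 2 / bfm J (a + b) (a + b) * bfm J (a + b) a = 1 := by
        have h2 : bfm J (a + b) a ≠ 0 := by
          rw [hdd] at hs; intro h; rw [h] at hs; simp at hs
        rw [hdd]; field_simp
      have e1 : reflM J (a + b) *ᵥ a = -b := by
        rw [reflM_apply hJ, hone, one_smul]; abel
      have e2 : reflM J b *ᵥ (-b) = b := by
        have hbn : bfm J b (-b) = -bfm J b b := by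
          have := bfm_smul_right J (-1 : ℝ) b b; simpa using this
        have hone2 : 2 / bfm J b b * bfm J b (-b) = -2 := by
          rw [hbn]; field_simp
        rw [reflM_apply hJ, hone2]
        ext i; simp; ring
      rw [← mulVec_mulVec, e1, e2]
    · have f1 : reflM J (a + b) *ᵥ x = x := by
        refine reflM_fix hJ ?_
        rw [bfm_add_left, bfm_symm hJ a x, bfm_symm hJ b x, hx1, hx2, add_zero]
      have f2 : reflM J b *ᵥ x = x := by
        refine reflM_fix hJ ?_
        rw [bfm_symm hJ, hx2]
      rw [← mulVec_mulVec, f1, f2]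

/-- Core Witt-style extension lemma: orthogonal anisotropic families with matching Gram
data are related by an isometry which moreover fixes common orthogonals. -/
lemma core_lemma {J : Matrix (Fin N) (Fin N) ℝ} (hJ : Jᵀ = J) :
    ∀ (n : ℕ) (a b : Fin n → (Fin N → ℝ)),
    (∀ i j, bfm J (a i) (a j) = bfm J (b i) (b j)) →
    (∀ i j, i ≠ j → bfm J (a i) (a j) = 0) →
    (∀ i, bfm J (a i) (a i) ≠ 0) →
    ∃ U : Matrix (Fin N) (Fin N) ℝ,
      (∀ x y, bfm J (U *ᵥ x) (U *ᵥ y) = bfm J x y) ∧ (∀ i, U *ᵥ a i = b i) ∧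
      (∀ x, (∀ i, bfm J x (a i) = 0 ∧ bfm J x (b i) = 0) → U *ᵥ x = x) := by
  intro n
  induction n with
  | zero =>
    intro a b _ _ _
    exact ⟨1, by simp, fun i => i.elim0, fun x _ => by simp⟩
  | succ n ih =>
    intro a b h1 h2 h3
    obtain ⟨U₁, hU₁iso, hU₁a, hU₁fix⟩ := step_lemma hJ (h1 0 0) (h3 0)
    set a' : Fin n → (Fin N → ℝ) := fun i => U₁ *ᵥ a i.succ with ha'
    obtain ⟨V, hViso, hVa, hVfix⟩ := ih a' (fun i => b i.succ)
      (fun i j => by rw [ha']; simp only; rw [hU₁iso]; exact h1 i.succ j.succ)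
      (fun i j hij => by
        rw [ha']; simp only; rw [hU₁iso]
        exact h2 i.succ j.succ (fun h => hij (Fin.succ_injective _ h)))
      (fun i => by rw [ha']; simp only; rw [hU₁iso]; exact h3 i.succ)
    refine ⟨V * U₁, fun x y => ?_, fun i => ?_, fun x hx => ?_⟩
    · rw [← mulVec_mulVec, ← mulVec_mulVec, hViso, hU₁iso]
    · refine Fin.cases ?_ (fun i => ?_) i
      · rw [← mulVec_mulVec, hU₁a]
        refine hVfix _ (fun i => ⟨?_, ?_⟩)
        · rw [ha']; simp only
          rw [← hU₁a, hU₁iso]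
          exact h2 0 i.succ (Fin.succ_ne_zero i).symm
        · rw [← h1 0 i.succ]
          exact h2 0 i.succ (Fin.succ_ne_zero i).symm
      · rw [← mulVec_mulVec]
        exact hVa i
    · have hfix1 : U₁ *ᵥ x = x := hU₁fix x (hx 0).1 (hx 0).2
      rw [← mulVec_mulVec, hfix1]
      refine hVfix x (fun i => ⟨?_, (hx i.succ).2⟩)
      rw [ha']; simp only
      rw [← hfix1, hU₁iso]
      exact (hx i.succ).1

lemma bfm_comp {J : Matrix (Fin N) (Fin N) ℝ} (U : Matrix (Fin N) (Fin N) ℝ)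
    (x y : Fin N → ℝ) :
    bfm J (U *ᵥ x) (U *ᵥ y) = x ⬝ᵥ ((Uᵀ * J * U) *ᵥ y) := by
  rw [bfm, mulVec_mulVec, dotProduct_comm, dotProduct_mulVec, ← mulVec_transpose,
    mulVec_mulVec, dotProduct_comm, ← Matrix.mul_assoc]

lemma entry_of (M : Matrix (Fin N) (Fin N) ℝ) (i j : Fin N) :
    (Pi.single i 1 : Fin N → ℝ) ⬝ᵥ (M *ᵥ Pi.single j 1) = M i j := by
  rw [mulVec_single_one]
  simp [dotProduct, Pi.single_apply]

variable {q : ℕ}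

lemma gram_pull {J : Matrix (Fin N) (Fin N) ℝ} (M : Matrix (Fin q) (Fin N) ℝ)
    (c d : Fin q → ℝ) :
    bfm J (Mᵀ *ᵥ c) (Mᵀ *ᵥ d) = c ⬝ᵥ ((M * J * Mᵀ) *ᵥ d) := by
  have h : (M * J * Mᵀ) *ᵥ d = M *ᵥ (J *ᵥ (Mᵀ *ᵥ d)) := by
    rw [mulVec_mulVec, mulVec_mulVec]
  rw [bfm, h, dotProduct_mulVec c, ← mulVec_transpose, dotProduct_comm, dotProduct_mulVec,
    ← mulVec_transpose, dotProduct_comm]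

lemma ker_lemma {J : Matrix (Fin N) (Fin N) ℝ} {A : Matrix (Fin q) (Fin N) ℝ}
    (hrank : (A * J * Aᵀ).rank = A.rank) :
    LinearMap.ker (A * J * Aᵀ).mulVecLin = LinearMap.ker Aᵀ.mulVecLin := by
  have hle : LinearMap.ker Aᵀ.mulVecLin ≤ LinearMap.ker (A * J * Aᵀ).mulVecLin := by
    intro c hc
    simp only [LinearMap.mem_ker, mulVecLin_apply] at *
    rw [← mulVec_mulVec, ← mulVec_mulVec, hc, mulVec_zero, mulVec_zero]
  refine (Submodule.eq_of_le_of_finrank_eq hle ?_).symm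
  have r1 := LinearMap.finrank_range_add_finrank_ker (Aᵀ).mulVecLin
  have r2 := LinearMap.finrank_range_add_finrank_ker (A * J * Aᵀ).mulVecLin
  have hAr : Aᵀ.rank = A.rank := A.rank_transpose
  simp only [Matrix.rank] at hrank hAr
  simp only [Module.finrank_pi, Fintype.card_fin] at r1 r2
  omega

end Helpers

/-- Witt-type extension lemma: if two `q × N` matrices `A, B` have the same Gram matrix
with respect to a non-degenerate symmetric bilinear form `⟨u,v⟩₁ = uᵀ J v`, the kernels
of `Aᵀ` and `Bᵀ` coincide, and the rank of the Gram matrix equals the rank of `A`,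
then `B = A Uᵀ` for some isometry `U` of the bilinear form. -/
theorem gram_isometry_exists {q N : ℕ}
    (J : Matrix (Fin N) (Fin N) ℝ) (hJsymm : Jᵀ = J) (hJunit : IsUnit J.det)
    (A B : Matrix (Fin q) (Fin N) ℝ)
    (hGram : A * J * Aᵀ = B * J * Bᵀ)
    (hker : LinearMap.ker (Aᵀ.mulVecLin) = LinearMap.ker (Bᵀ.mulVecLin))
    (hrank : (A * J * Aᵀ).rank = A.rank) :
    ∃ U : Matrix (Fin N) (Fin N) ℝ, IsUnit U.det ∧ Uᵀ * J * U = J ∧ B = A * Uᵀ := by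
  classical
  -- the rows of `A`
  set α : Fin q → (Fin N → ℝ) := fun i => A i with hα
  set W : Submodule ℝ (Fin N → ℝ) := Submodule.span ℝ (Set.range α) with hW
  set Φ : LinearMap.BilinForm ℝ (Fin N → ℝ) := Matrix.toLinearMap₂' ℝ J with hΦ
  have hΦapp : ∀ x y, Φ x y = bfm J x y := fun x y => Matrix.toLinearMap₂'_apply' J x y
  have hΦsymm : Φ.IsSymm := by
    refine LinearMap.BilinForm.isSymm_def.mpr ?_
    intro x y
    simp only [RingHom.id_apply, hΦapp, bfm_symm hJsymm]
  -- kernel facts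
  have hkerl : ∀ u : Fin q → ℝ, (A * J * Aᵀ) *ᵥ u = 0 → Aᵀ *ᵥ u = 0 ∧ Bᵀ *ᵥ u = 0 := by
    intro u hu
    have h1 : u ∈ LinearMap.ker (A * J * Aᵀ).mulVecLin :=
      LinearMap.mem_ker.mpr (by rw [mulVecLin_apply]; exact hu)
    rw [ker_lemma hrank] at h1
    have h2 := h1
    rw [hker] at h2
    rw [LinearMap.mem_ker, mulVecLin_apply] at h1 h2
    exact ⟨h1, h2⟩
  have hαi : ∀ i, α i = Aᵀ *ᵥ Pi.single i 1 := by
    intro i; rw [mulVec_single_one]; rfl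
  have hβi : ∀ i, (B i : Fin N → ℝ) = Bᵀ *ᵥ Pi.single i 1 := by
    intro i; rw [mulVec_single_one]; rfl
  -- orthogonal basis of the row span
  obtain ⟨v, hv⟩ := LinearMap.BilinForm.exists_orthogonal_basis ((LinearMap.BilinForm.isSymm_iff.mp hΦsymm).domRestrict W)
  set e : Fin (Module.finrank ℝ ↥W) → (Fin N → ℝ) := fun k => (v k : Fin N → ℝ) with he
  have hmem : ∀ k, e k ∈ W := fun k => (v k).2
  choose c hc using fun k => (Submodule.mem_span_range_iff_exists_fun ℝ).mp (hmem k)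
  have hsum : ∀ d : Fin q → ℝ, (∑ i, d i • α i) = Aᵀ *ᵥ d := by
    intro d; ext k
    simp [hα, mulVec, dotProduct, transpose_apply, Finset.sum_apply, mul_comm]
  have hce : ∀ k, Aᵀ *ᵥ c k = e k := fun k => by rw [← hsum, hc]
  set f : Fin (Module.finrank ℝ ↥W) → (Fin N → ℝ) := fun k => Bᵀ *ᵥ c k with hf
  -- the Gram data matches
  have h1 : ∀ k l, bfm J (e k) (e l) = bfm J (f k) (f l) := by
    intro k l
    rw [← hce k, ← hce l, hf]
    simp only
    rw [gram_pull, gram_pull, hGram]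
  have h2 : ∀ k l, k ≠ l → bfm J (e k) (e l) = 0 := by
    intro k l hkl
    have := hv hkl
    simp only [Function.onFun, LinearMap.IsOrtho, LinearMap.domRestrict₁₂_apply] at this
    rw [← hΦapp]
    exact this
  -- expansion of elements of W in the basis
  have hrepr : ∀ w : W, (w : Fin N → ℝ) = ∑ l, v.repr w l • e l := by
    intro w
    conv_lhs => rw [← v.sum_repr w]
    push_cast
    rfl
  -- anisotropy
  have h3 : ∀ k, bfm J (e k) (e k) ≠ 0 := by
    intro k h0
    have horthall : ∀ l, bfm J (e k) (e l) = 0 := by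
      intro l
      rcases eq_or_ne k l with rfl | hne
      · exact h0
      · exact h2 k l hne
    have horthW : ∀ i, bfm J (α i) (e k) = 0 := by
      intro i
      have hmemα : α i ∈ W := Submodule.subset_span (Set.mem_range_self i)
      have expand := hrepr ⟨α i, hmemα⟩
      simp only [Submodule.coe_mk] at expand
      rw [bfm_symm hJsymm, expand]
      rw [show bfm J (e k) (∑ l, v.repr ⟨α i, hmemα⟩ l • e l)
          = ∑ l, v.repr ⟨α i, hmemα⟩ l * bfm J (e k) (e l) by
        rw [← hΦapp, map_sum]
        refine Finset.sum_congr rfl fun l _ => ?_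
        rw [_root_.map_smul, smul_eq_mul, hΦapp]]
      simp [horthall]
    have hGc : (A * J * Aᵀ) *ᵥ c k = 0 := by
      ext i
      have := horthW i
      rw [hαi i, ← hce k, gram_pull] at this
      simpa using this
    have hAc : Aᵀ *ᵥ c k = 0 := (hkerl _ hGc).1
    have : e k = 0 := by rw [← hce k, hAc]
    exact Module.Basis.ne_zero v k (ZeroMemClass.coe_eq_zero.mp this)
  -- apply the core lemma
  obtain ⟨U, hUiso, hUe, _⟩ := core_lemma hJsymm _ e f h1 h2 h3
  -- U maps rows of A to rows of B
  have hrow : ∀ i, U *ᵥ α i = B i := by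
    intro i
    have hmemα : α i ∈ W := Submodule.subset_span (Set.mem_range_self i)
    set d : Fin (Module.finrank ℝ ↥W) → ℝ := fun l => v.repr ⟨α i, hmemα⟩ l with hd
    have expand : α i = ∑ l, d l • e l := by
      have := hrepr ⟨α i, hmemα⟩
      simpa using this
    set u : Fin q → ℝ := ∑ l, d l • c l with hu
    have hAu : Aᵀ *ᵥ u = α i := by
      rw [hu, show Aᵀ *ᵥ ∑ l, d l • c l = ∑ l, d l • (Aᵀ *ᵥ c l) by
        rw [← mulVecLin_apply, map_sum]
        exact Finset.sum_congr rfl fun l _ => by rw [_root_.map_smul, mulVecLin_apply]]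
      rw [expand]
      exact Finset.sum_congr rfl fun l _ => by rw [hce]
    have hker0 : Aᵀ *ᵥ (Pi.single i 1 - u) = 0 := by
      rw [mulVec_sub, hAu, ← hαi, sub_self]
    have hBker : Bᵀ *ᵥ (Pi.single i 1 - u) = 0 := by
      have hmem2 : (Pi.single i 1 - u) ∈ LinearMap.ker Aᵀ.mulVecLin :=
        LinearMap.mem_ker.mpr (by rw [mulVecLin_apply]; exact hker0)
      rw [hker] at hmem2
      rw [LinearMap.mem_ker, mulVecLin_apply] at hmem2
      exact hmem2
    have hBu : (B i : Fin N → ℝ) = ∑ l, d l • f l := by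
      have hsub : Bᵀ *ᵥ Pi.single i 1 - Bᵀ *ᵥ u = 0 := by
        rw [← mulVec_sub]; exact hBker
      have : Bᵀ *ᵥ Pi.single i 1 = Bᵀ *ᵥ u := sub_eq_zero.mp hsub
      rw [hβi, this, hu, show Bᵀ *ᵥ ∑ l, d l • c l = ∑ l, d l • (Bᵀ *ᵥ c l) by
        rw [← mulVecLin_apply, map_sum]
        exact Finset.sum_congr rfl fun l _ => by rw [_root_.map_smul, mulVecLin_apply]]
    have hUsum : U *ᵥ α i = ∑ l, d l • (U *ᵥ e l) := by
      rw [expand, ← mulVecLin_apply, map_sum]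
      exact Finset.sum_congr rfl fun l _ => by rw [_root_.map_smul, mulVecLin_apply]
    rw [hUsum, hBu]
    exact Finset.sum_congr rfl fun l _ => by rw [hUe]
  -- package up
  have hUJ : Uᵀ * J * U = J := by
    ext i j
    have key := hUiso (Pi.single i 1) (Pi.single j 1)
    rw [bfm_comp, entry_of] at key
    rw [key, bfm, entry_of]
  have hdet : IsUnit U.det := by
    have hd : Uᵀ.det * J.det * U.det = J.det := by
      rw [← det_mul, ← det_mul, hUJ]
    rw [det_transpose] at hd
    have hJd : J.det ≠ 0 := hJunit.ne_zero
    have : U.det * U.det = 1 := by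
      have h2 : U.det * U.det * J.det = 1 * J.det := by linear_combination hd
      exact mul_right_cancel₀ hJd h2
    exact IsUnit.of_mul_eq_one _ this
  refine ⟨U, hdet, hUJ, ?_⟩
  ext i j
  have := congrFun (hrow i) j
  simp only [mulVec, dotProduct, hα] at this
  rw [mul_apply]
  rw [← this]
  exact Finset.sum_congr rfl fun k _ => by rw [transpose_apply, mul_comm]
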